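/- For Δ > 0 and ρ ∈ (−1,1) with ρ·e^{−2Δ} < 1, the solution of the scalar ODE Σ'(t) = −2(κ + S(t))·Σ(t) + 1 with Σ(0) = 0, where S(t) = −κ + Δ(1+ρe^{−2Δ(1−t)})/(1−ρe^{−2Δ(1−t)}), satisfies Σ(1) = ((1−ρ)/(1−ρe^{−2Δ}))·(1−e^{−2Δ})/(2Δ). -/

import Mathlib

open Set

/-- Terminal value of the variance under the closed-form Riccati gain: the solution
of `Σ' = -2(κ + S)Σ + 1`, `Σ 0 = 0`, with
`S t = -κ + Δ(1 + ρ e^{-2Δ(1-t)})/(1 - ρ e^{-2Δ(1-t)})`, satisfies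
`Σ 1 = ((1-ρ)/(1-ρ e^{-2Δ})) (1 - e^{-2Δ})/(2Δ)`. -/
theorem stmt_5 (κ Δ ρ : ℝ) (hΔ : 0 < Δ) (hρ : ρ ∈ Ioo (-1 : ℝ) 1)
    (hρr : ρ * Real.exp (-2 * Δ) < 1)
    (S : ℝ → ℝ)
    (hS : ∀ t, S t = -κ + Δ * (1 + ρ * Real.exp (-2 * Δ * (1 - t)))
        / (1 - ρ * Real.exp (-2 * Δ * (1 - t))))
    (V : ℝ → ℝ) (hV0 : V 0 = 0)
    (hVode : ∀ t ∈ Icc (0 : ℝ) 1, HasDerivAt V (-2 * (κ + S t) * V t + 1) t) :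
    V 1 = (1 - ρ) / (1 - ρ * Real.exp (-2 * Δ)) * ((1 - Real.exp (-2 * Δ)) / (2 * Δ)) := by
  obtain ⟨hρ1, hρ2⟩ := hρ
  have hrpos : 0 < Real.exp (-2 * Δ) := Real.exp_pos _
  set r : ℝ := Real.exp (-2 * Δ) with hr
  have hρr' : 0 < 1 - ρ * r := by linarith
  have hq : ∀ t ∈ Icc (0:ℝ) 1, 0 < 1 - ρ * r * Real.exp (2*Δ*t) := by
    intro t ht
    have h1 : 0 < r * Real.exp (2*Δ*t) := by positivity
    have h2 : r * Real.exp (2*Δ*t) ≤ 1 := by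
      rw [hr, ← Real.exp_add]
      have : -2*Δ + 2*Δ*t ≤ 0 := by nlinarith [ht.2]
      calc Real.exp (-2*Δ + 2*Δ*t) ≤ Real.exp 0 := Real.exp_le_exp.mpr this
        _ = 1 := Real.exp_zero
    nlinarith [mul_pos (by linarith : (0:ℝ) < 1 - ρ) h1]
  -- derivative of E := M * (V - W) is zero on Icc 0 1
  have hE : ∀ t ∈ Icc (0:ℝ) 1, HasDerivAt
      (fun s => (Real.exp (2*Δ*s) / (1 - ρ*r*Real.exp (2*Δ*s))^2) *
        (V s - (1 - ρ*r*Real.exp (2*Δ*s)) * (1 - Real.exp (-(2*Δ*s))) / (2*Δ*(1-ρ*r)))) 0 t := by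
    intro t ht
    have hqt := hq t ht
    have hlin : HasDerivAt (fun s : ℝ => 2*Δ*s) (2*Δ) t := by
      simpa using (hasDerivAt_id t).const_mul (2*Δ)
    have he1 : HasDerivAt (fun s => Real.exp (2*Δ*s)) (Real.exp (2*Δ*t) * (2*Δ)) t := hlin.exp
    have he2 : HasDerivAt (fun s => Real.exp (-(2*Δ*s))) (Real.exp (-(2*Δ*t)) * -(2*Δ)) t :=
      hlin.neg.exp
    have hqd : HasDerivAt (fun s => 1 - ρ*r*Real.exp (2*Δ*s))
        (-(ρ*r*(Real.exp (2*Δ*t) * (2*Δ)))) t := (he1.const_mul (ρ*r)).const_sub 1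
    have hsplit : Real.exp (-2*Δ*(1-t)) = r * Real.exp (2*Δ*t) := by
      rw [hr, ← Real.exp_add]; ring_nf
    have hinv : Real.exp (-(2*Δ*t)) = (Real.exp (2*Δ*t))⁻¹ := by
      rw [← Real.exp_neg]
    have hexp : Real.exp (2*Δ*t) ≠ 0 := Real.exp_ne_zero _
    have hq0 : (1 : ℝ) - ρ*r*Real.exp (2*Δ*t) ≠ 0 := hqt.ne'
    have hq0' : (1 : ℝ) - ρ*(r*Real.exp (2*Δ*t)) ≠ 0 := by rw [← mul_assoc]; exact hq0
    have hc0 : (2*Δ*(1-ρ*r)) ≠ 0 := by positivity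
    have hgain : -2 * (κ + S t)
        = -(2*Δ*(1 + ρ*r*Real.exp (2*Δ*t))) / (1 - ρ*r*Real.exp (2*Δ*t)) := by
      rw [hS, hsplit]
      field_simp [hq0, hq0']
      ring
    have hW' : HasDerivAt
        (fun s => (1 - ρ*r*Real.exp (2*Δ*s)) * (1 - Real.exp (-(2*Δ*s))) / (2*Δ*(1-ρ*r)))
        (-2 * (κ + S t) *
          ((1 - ρ*r*Real.exp (2*Δ*t)) * (1 - Real.exp (-(2*Δ*t))) / (2*Δ*(1-ρ*r))) + 1) t := by
      refine ((hqd.mul (he2.const_sub 1)).div_const (2*Δ*(1-ρ*r))).congr_deriv ?_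
      rw [hgain, hinv]
      field_simp [hq0, hexp, hc0]
      ring
    have hM' : HasDerivAt (fun s => Real.exp (2*Δ*s) / (1 - ρ*r*Real.exp (2*Δ*s))^2)
        (-(-2 * (κ + S t)) * (Real.exp (2*Δ*t) / (1 - ρ*r*Real.exp (2*Δ*t))^2)) t := by
      refine (he1.div (hqd.pow 2) (pow_ne_zero _ hq0)).congr_deriv ?_
      simp only [Pi.pow_apply, Nat.reduceSub, pow_one]
      rw [hgain]
      field_simp [hq0, hexp]
      ring
    have h := hM'.mul ((hVode t ht).sub hW')
    refine h.congr_deriv ?_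
    simp only [Pi.sub_apply]
    ring
  have hcont : ContinuousOn
      (fun s => (Real.exp (2*Δ*s) / (1 - ρ*r*Real.exp (2*Δ*s))^2) *
        (V s - (1 - ρ*r*Real.exp (2*Δ*s)) * (1 - Real.exp (-(2*Δ*s))) / (2*Δ*(1-ρ*r))))
      (Icc 0 1) := fun t ht => ((hE t ht).continuousAt).continuousWithinAt
  have hconst := constant_of_has_deriv_right_zero hcont
    (fun x hx => ((hE x (Ico_subset_Icc_self hx)).hasDerivWithinAt)) 1
    (right_mem_Icc.mpr zero_le_one)
  have hE0 : (Real.exp (2*Δ*0) / (1 - ρ*r*Real.exp (2*Δ*0))^2) *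
      (V 0 - (1 - ρ*r*Real.exp (2*Δ*0)) * (1 - Real.exp (-(2*Δ*0))) / (2*Δ*(1-ρ*r))) = 0 := by
    norm_num [hV0]
  rw [hE0] at hconst
  have hre : r * Real.exp (2*Δ*1) = 1 := by
    rw [hr, ← Real.exp_add]; norm_num
  have hq1 : (1 : ℝ) - ρ*r*Real.exp (2*Δ*1) = 1 - ρ := by
    rw [mul_assoc, hre, mul_one]
  have hM1 : Real.exp (2*Δ*1) / (1 - ρ*r*Real.exp (2*Δ*1))^2 ≠ 0 := by
    rw [hq1]
    have : (0:ℝ) < 1 - ρ := by linarith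
    positivity
  have hV1 : V 1 = (1 - ρ*r*Real.exp (2*Δ*1)) * (1 - Real.exp (-(2*Δ*1))) / (2*Δ*(1-ρ*r)) := by
    have := mul_eq_zero.mp hconst
    rcases this with h | h
    · exact absurd h hM1
    · linarith [sub_eq_zero.mp h]
  rw [hV1, hq1]
  have h1 : Real.exp (-(2*Δ*1)) = r := by rw [hr]; ring_nf
  rw [h1]
  field_simp
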